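/- Let X be a G-tree. Call a vertex x inessential if x has exactly two neighbors y₁ and y₂ and stabilizer(x) ≤ stabilizer(y₁) and stabilizer(x) ≤ stabilizer(y₂); call x essential otherwise. If X has at least one essential vertex, then every elliptic subgroup of G fixes an essential vertex: for every subgroup H ≤ G that fixes some vertex of X, there is an essential vertex fixed by every element of H. -/
import Mathlib


/-- A `G`-tree: a simple graph `T` on vertex set `V` that is a tree (connected and acyclic),
together with an action of `G` on `V` by automorphisms of `T` (adjacency is preserved)
and without inversions. -/
structure IsGTree (G : Type*) [Group G] {V : Type*} [MulAction G V] (T : SimpleGraph V) :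
    Prop where
  isTree : T.IsTree
  adj_smul : ∀ (g : G) (u v : V), T.Adj u v → T.Adj (g • u) (g • v)
  no_inversions : ∀ (g : G) (u v : V), T.Adj u v → ¬(g • u = v ∧ g • v = u)

/-- A vertex `x` of a `G`-tree is *inessential* if it has exactly two neighbors `y₁, y₂`
and its stabilizer is contained in the stabilizers of both; otherwise `x` is
*essential*. -/
def Inessential (G : Type*) [Group G] {V : Type*} [MulAction G V] (T : SimpleGraph V)
    (x : V) : Prop :=
  ∃ y₁ y₂ : V, y₁ ≠ y₂ ∧ T.neighborSet x = {y₁, y₂} ∧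
    MulAction.stabilizer G x ≤ MulAction.stabilizer G y₁ ∧
    MulAction.stabilizer G x ≤ MulAction.stabilizer G y₂

/-- If a `G`-tree has at least one essential vertex, then every elliptic subgroup fixes
an essential vertex. -/
theorem elliptic_subgroup_fixes_essential_vertex
    (G : Type*) [Group G] (V : Type*) [MulAction G V] (X : SimpleGraph V)
    (hX : IsGTree G X)
    (hess : ∃ x : V, ¬ Inessential G X x) :
    ∀ H : Subgroup G, (∃ v : V, ∀ h ∈ H, h • v = v) →
      ∃ v : V, ¬ Inessential G X v ∧ ∀ h ∈ H, h • v = v := by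
  obtain ⟨x, hx⟩ := hess
  rintro H ⟨v, hv⟩
  have hconn : X.Connected := hX.isTree.isConnected
  suffices h : ∀ n (v : V), X.dist v x = n → (∀ h ∈ H, h • v = v) →
      ∃ w : V, ¬ Inessential G X w ∧ ∀ h ∈ H, h • w = w from h _ v rfl hv
  intro n
  induction n using Nat.strong_induction_on with
  | _ n ih =>
    intro v hdist hfix
    by_cases hv' : Inessential G X v
    · obtain ⟨y₁, y₂, hne, hnbr, h1, h2⟩ := hv'
      have hvx : v ≠ x := by
        rintro rfl; exact hx ⟨y₁, y₂, hne, hnbr, h1, h2⟩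
      obtain ⟨q, hq⟩ := (hconn.preconnected v x).exists_walk_length_eq_dist
      cases q with
      | nil => exact absurd rfl hvx
      | @cons _ y _ hadj q' =>
        have hlt : X.dist y x < n := by
          have := SimpleGraph.dist_le q'
          simp only [SimpleGraph.Walk.length_cons, hdist] at hq
          omega
        have hmem : y ∈ X.neighborSet v := hadj
        rw [hnbr] at hmem
        have hstab : MulAction.stabilizer G v ≤ MulAction.stabilizer G y := by
          rcases hmem with rfl | rfl
          · exact h1
          · exact h2
        exact ih _ hlt y rfl fun h hh => hstab (hfix h hh)
    · exact ⟨v, hv', hfix⟩
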